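/- The space F^{(k)}_n of symmetric polynomials vanishing when k+1 variables coincide is stable under the operators l_m = Σ_{j=1}^n x_j^{m+1} ∂_j for all m ≥ -1. -/
import Mathlib


open MvPolynomial

lemma pderiv_rename_fiber {σ : Type*} [Fintype σ] [DecidableEq σ]
    (g : σ → σ) (p : MvPolynomial σ ℂ) (i : σ) :
    pderiv i (rename g p) =
      ∑ j ∈ Finset.univ.filter (fun j => g j = i), rename g (pderiv j p) := by
  induction p using MvPolynomial.induction_on with
  | C a => simp
  | add p q hp hq => simp [hp, hq, Finset.sum_add_distrib]
  | mul_X p s hp =>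
    have hδ : ∀ j, pderiv j (p * X s) = pderiv j p * X s + p * (if s = j then 1 else 0) := by
      intro j; rw [pderiv_mul, pderiv_X]; simp [Pi.single_apply]
    have hx : pderiv i (X (g s) : MvPolynomial σ ℂ) = if g s = i then 1 else 0 := by
      rw [pderiv_X]; simp [Pi.single_apply]
    rw [map_mul, rename_X, pderiv_mul, hx, hp, Finset.sum_mul]
    simp_rw [hδ, map_add, map_mul, rename_X, Finset.sum_add_distrib]
    congr 1
    have : ∀ j, rename g (if s = j then (1:MvPolynomial σ ℂ) else 0) =
        if s = j then 1 else 0 := by intro j; split <;> simp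
    simp_rw [this, mul_ite, mul_one, mul_zero, Finset.sum_ite_eq, Finset.mem_filter,
      Finset.mem_univ, true_and]

/-- The space F^{(k)}_n of symmetric polynomials vanishing when
k+1 variables coincide is stable under l_m = Σ_j x_j^{m+1} ∂_j for m ≥ -1. -/
theorem vanishing_space_stable_under_lm (k n : ℕ) (hk : 1 ≤ k)
    (m : ℤ) (hm : -1 ≤ m)
    (P : MvPolynomial (Fin n) ℂ) (hsym : P.IsSymmetric)
    (hvan : ∀ x : Fin n → ℂ,
      (∀ a b : Fin n, (a : ℕ) ≤ k → (b : ℕ) ≤ k → x a = x b) → eval x P = 0) :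
    ∀ x : Fin n → ℂ,
      (∀ a b : Fin n, (a : ℕ) ≤ k → (b : ℕ) ≤ k → x a = x b) →
      eval x (∑ j : Fin n, X j ^ (m + 1).toNat * pderiv j P) = 0 := by
  intro x hx
  cases n with
  | zero => simp
  | succ n =>
    set c := (m + 1).toNat with hc
    set g : Fin (n + 1) → Fin (n + 1) := fun j => if (j : ℕ) ≤ k then 0 else j with hg
    have h0k : ((0 : Fin (n + 1)) : ℕ) ≤ k := by simp
    -- g maps everything into the locus pattern; rename g P vanishes identically
    have hR : rename g P = 0 := by
      apply MvPolynomial.funext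
      intro y
      rw [eval_rename, map_zero]
      apply hvan
      intro a b ha hb
      have hga : g a = 0 := by simp [hg, ha]
      have hgb : g b = 0 := by simp [hg, hb]
      simp [Function.comp, hga, hgb]
    -- on the locus, x ∘ g = x
    have hxg : ∀ j, x (g j) = x j := by
      intro j
      by_cases h : (j : ℕ) ≤ k
      · have : g j = 0 := by simp [hg, h]
        rw [this]; exact hx 0 j h0k h
      · have : g j = j := by simp [hg, h]
        rw [this]
    -- consequently eval x (rename g q) = eval (x ∘ g) q; and for q = pderiv j P we use it
    have key : ∀ i : Fin (n + 1),
        ∑ j ∈ Finset.univ.filter (fun j => g j = i), eval x (rename g (pderiv j P)) = 0 := by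
      intro i
      have := pderiv_rename_fiber g P i
      rw [hR, map_zero] at this
      have h2 := congrArg (eval x) this.symm
      rw [map_zero, map_sum] at h2
      exact h2
    calc eval x (∑ j : Fin (n+1), X j ^ c * pderiv j P)
        = ∑ j : Fin (n+1), x (g j) ^ c * eval x (rename g (pderiv j P)) := by
          rw [map_sum]
          apply Finset.sum_congr rfl
          intro j _
          have hcomp : x ∘ g = x := by funext a; simpa [Function.comp] using hxg a
          rw [map_mul, map_pow, eval_X, hxg j, eval_rename, hcomp]
      _ = ∑ i : Fin (n+1), ∑ j ∈ Finset.univ.filter (fun j => g j = i),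
            x (g j) ^ c * eval x (rename g (pderiv j P)) :=
          (Finset.sum_fiberwise Finset.univ g _).symm
      _ = ∑ i : Fin (n+1), x i ^ c *
            ∑ j ∈ Finset.univ.filter (fun j => g j = i), eval x (rename g (pderiv j P)) := by
          apply Finset.sum_congr rfl
          intro i _
          rw [Finset.mul_sum]
          apply Finset.sum_congr rfl
          intro j hj
          rw [Finset.mem_filter] at hj
          rw [hj.2]
      _ = 0 := by
          apply Finset.sum_eq_zero
          intro i _
          rw [key i, mul_zero]
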